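/- Let needle length ℓ and spacing d satisfy 0 < ℓ ≤ d. Suppose the needle's midpoint lands in the strip [0, n·d] with an arbitrary continuous probability density f on [0, n·d] for its x-coordinate (perpendicular to the lines), while the angle Θ is uniform on [0, π) and independent of the position. Let p_n(f) be the probability that the needle (of length ℓ at angle Θ about its midpoint) crosses one of the lines x = kd, k = 0,…,n. If f is the uniform density on [0, nd], then p_n(f) tends to 2ℓ/(πd) as n → ∞ — indeed p_n(f) equals 2ℓ/(πd) up to a boundary correction term bounded by C/n for some constant C depending only on ℓ and d. -/

import Mathlib

open MeasureTheory Set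

/-- The probability that a needle of length `ℓ`, with midpoint `x`-coordinate uniform
on `[0, n·d]` and angle uniform on `[0, π)` (independently), crosses one of the lines
`x = k·d`, `k = 0, …, n`. -/
noncomputable def buffonFiniteProb (ℓ d : ℝ) (n : ℕ) : ℝ :=
  ((((ENNReal.ofReal (1 / ((n : ℝ) * d))) • volume.restrict (Icc (0:ℝ) ((n : ℝ) * d))).prod
      ((ENNReal.ofReal (1 / Real.pi)) • volume.restrict (Ico (0:ℝ) Real.pi)))
    {p : ℝ × ℝ | ∃ k : ℕ, k ≤ n ∧
      (k : ℝ) * d ∈ uIcc (p.1 - ℓ / 2 * Real.cos p.2) (p.1 + ℓ / 2 * Real.cos p.2)}).toReal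


lemma mem_center_uIcc {x c y : ℝ} : y ∈ uIcc (x - c) (x + c) ↔ |x - y| ≤ |c| := by
  rw [Set.mem_uIcc, abs_le]
  rcases abs_cases c with ⟨hc, hc0⟩ | ⟨hc, hc0⟩ <;> rw [hc] <;> constructor
  · rintro (h | h) <;> constructor <;> linarith [h.1, h.2]
  · intro h; left; constructor <;> linarith [h.1, h.2]
  · rintro (h | h) <;> constructor <;> linarith [h.1, h.2]
  · intro h; right; constructor <;> linarith [h.1, h.2]

lemma icc_inter_null {d h : ℝ} (hd : 0 < d) (hh : h ≤ d / 2) {j k : ℕ} (hjk : j ≠ k) :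
    volume (Icc ((j:ℝ)*d - h) ((j:ℝ)*d + h) ∩ Icc ((k:ℝ)*d - h) ((k:ℝ)*d + h)) = 0 := by
  rw [Icc_inter_Icc, Real.volume_Icc, ENNReal.ofReal_eq_zero, sub_nonpos]
  rcases Nat.lt_or_ge j k with hlt | hge
  · have h1 : (j:ℝ) + 1 ≤ k := by exact_mod_cast hlt
    have h2 : ((j:ℝ) + 1) * d ≤ (k:ℝ) * d := mul_le_mul_of_nonneg_right h1 hd.le
    calc ((j:ℝ)*d + h) ⊓ ((k:ℝ)*d + h) ≤ (j:ℝ)*d + h := inf_le_left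
      _ ≤ (k:ℝ)*d - h := by nlinarith
      _ ≤ ((j:ℝ)*d - h) ⊔ ((k:ℝ)*d - h) := le_sup_right
  · have hlt : k < j := lt_of_le_of_ne hge (Ne.symm hjk) |>.gt
    have h1 : (k:ℝ) + 1 ≤ j := by exact_mod_cast hlt
    have h2 : ((k:ℝ) + 1) * d ≤ (j:ℝ) * d := mul_le_mul_of_nonneg_right h1 hd.le
    calc ((j:ℝ)*d + h) ⊓ ((k:ℝ)*d + h) ≤ (k:ℝ)*d + h := inf_le_right
      _ ≤ (j:ℝ)*d - h := by nlinarith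
      _ ≤ ((j:ℝ)*d - h) ⊔ ((k:ℝ)*d - h) := le_sup_left

lemma slice_vol {d : ℝ} (hd : 0 < d) {n : ℕ} (hn : 1 ≤ n) {h : ℝ} (hh0 : 0 ≤ h)
    (hhd : h ≤ d / 2) :
    volume ((⋃ k ∈ Finset.range (n+1), Icc ((k:ℝ)*d - h) ((k:ℝ)*d + h)) ∩ Icc 0 ((n:ℝ)*d))
      = ENNReal.ofReal (2 * n * h) := by
  have hn1 : (1:ℝ) ≤ (n:ℝ) := by exact_mod_cast hn
  have hdnd : d ≤ (n:ℝ) * d := by nlinarith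
  rw [Set.iUnion₂_inter]
  rw [measure_biUnion_finset₀]
  · have hval : ∀ k ∈ Finset.range (n+1),
        volume (Icc ((k:ℝ)*d - h) ((k:ℝ)*d + h) ∩ Icc 0 ((n:ℝ)*d))
          = ENNReal.ofReal ((((k:ℝ)*d + h) ⊓ ((n:ℝ)*d)) - (((k:ℝ)*d - h) ⊔ 0)) := by
      intro k hk
      rw [Icc_inter_Icc, Real.volume_Icc]
    rw [Finset.sum_congr rfl hval]
    have hnonneg : ∀ k ∈ Finset.range (n+1),
        0 ≤ (((k:ℝ)*d + h) ⊓ ((n:ℝ)*d)) - (((k:ℝ)*d - h) ⊔ 0) := by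
      intro k hk
      have hkn : (k:ℝ) ≤ n := by exact_mod_cast Nat.lt_succ_iff.1 (Finset.mem_range.1 hk)
      have h1 : (k:ℝ)*d ≤ ((k:ℝ)*d + h) ⊓ ((n:ℝ)*d) :=
        le_inf (by linarith) (by nlinarith)
      have h2 : ((k:ℝ)*d - h) ⊔ 0 ≤ (k:ℝ)*d :=
        sup_le (by linarith) (by nlinarith)
      linarith
    rw [← ENNReal.ofReal_sum_of_nonneg hnonneg]
    congr 1
    have hval2 : ∀ k ∈ Finset.range (n+1),
        (((k:ℝ)*d + h) ⊓ ((n:ℝ)*d)) - (((k:ℝ)*d - h) ⊔ 0)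
          = 2*h - (if k = 0 then h else 0) - (if k = n then h else 0) := by
      intro k hk
      have hkn : k ≤ n := Nat.lt_succ_iff.1 (Finset.mem_range.1 hk)
      by_cases hk0 : k = 0
      · subst hk0
        have hn0 : (0:ℕ) ≠ n := by omega
        rw [if_pos rfl, if_neg hn0]
        norm_num
        rw [inf_eq_left.2 (by linarith), sup_eq_right.2 (by linarith)]
        ring
      · by_cases hkn' : k = n
        · subst hkn'
          rw [if_neg hk0, if_pos rfl]
          rw [inf_eq_right.2 (by linarith), sup_eq_left.2 (by linarith)]
          ring
        · have hk1 : (1:ℝ) ≤ (k:ℝ) := by exact_mod_cast Nat.one_le_iff_ne_zero.2 hk0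
          have hkn2 : (k:ℝ) + 1 ≤ (n:ℝ) := by exact_mod_cast Nat.succ_le_of_lt (lt_of_le_of_ne hkn hkn')
          rw [if_neg hk0, if_neg hkn']
          rw [inf_eq_left.2 (by nlinarith), sup_eq_left.2 (by nlinarith)]
          ring
    rw [Finset.sum_congr rfl hval2]
    rw [Finset.sum_sub_distrib, Finset.sum_sub_distrib, Finset.sum_const, Finset.sum_ite_eq',
      Finset.sum_ite_eq']
    simp only [Finset.card_range, if_pos (Finset.mem_range.2 (Nat.lt_succ_self n)),
      if_pos (Finset.mem_range.2 (Nat.succ_pos n)), nsmul_eq_mul]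
    push_cast
    ring
  · intro j hj k hk hjk
    refine measure_mono_null (fun x hx => ?_) (icc_inter_null hd hhd hjk)
    exact ⟨hx.1.1, hx.2.1⟩
  · intro k hk
    exact (measurableSet_Icc.inter measurableSet_Icc).nullMeasurableSet

lemma abs_cos_integral : ∫ x in (0:ℝ)..Real.pi, |Real.cos x| = 2 := by
  have hpi := Real.pi_pos
  have h1 : ∫ x in (0:ℝ)..(Real.pi/2), |Real.cos x| = 1 := by
    rw [intervalIntegral.integral_congr (g := Real.cos) ?_, integral_cos]
    · simp
    · intro x hx
      rw [uIcc_of_le (by linarith)] at hx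
      exact abs_of_nonneg (Real.cos_nonneg_of_mem_Icc ⟨by linarith [hx.1], hx.2⟩)
  have h2 : ∫ x in (Real.pi/2)..Real.pi, |Real.cos x| = 1 := by
    rw [intervalIntegral.integral_congr (g := fun x => -Real.cos x) ?_]
    · rw [intervalIntegral.integral_neg, integral_cos]; simp
    · intro x hx
      rw [uIcc_of_le (by linarith)] at hx
      exact abs_of_nonpos (Real.cos_nonpos_of_pi_div_two_le_of_le hx.1 (by linarith [hx.2]))
  have := intervalIntegral.integral_add_adjacent_intervals
    (a := 0) (b := Real.pi/2) (c := Real.pi) (f := fun x => |Real.cos x|) (μ := volume)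
    (Real.continuous_cos.abs.intervalIntegrable _ _)
    (Real.continuous_cos.abs.intervalIntegrable _ _)
  rw [h1, h2] at this
  linarith

lemma buffon_eq (ℓ d : ℝ) (hℓ : 0 < ℓ) (hld : ℓ ≤ d) {n : ℕ} (hn : 1 ≤ n) :
    buffonFiniteProb ℓ d n = 2 * ℓ / (Real.pi * d) := by
  have hd : (0:ℝ) < d := lt_of_lt_of_le hℓ hld
  have hpi := Real.pi_pos
  have hn0 : (0:ℝ) < (n:ℝ) := by exact_mod_cast hn
  set S : Set (ℝ × ℝ) := {p : ℝ × ℝ | ∃ k : ℕ, k ≤ n ∧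
      (k : ℝ) * d ∈ uIcc (p.1 - ℓ / 2 * Real.cos p.2) (p.1 + ℓ / 2 * Real.cos p.2)} with hS
  have hSeq : S = ⋃ k ∈ Finset.range (n+1),
      {p : ℝ × ℝ | |p.1 - (k:ℝ)*d| ≤ ℓ/2 * |Real.cos p.2|} := by
    ext p
    simp only [hS, mem_setOf_eq, mem_iUnion, Finset.mem_range, Nat.lt_succ_iff,
      exists_prop]
    constructor
    · rintro ⟨k, hk, hmem⟩
      refine ⟨k, hk, ?_⟩
      have := mem_center_uIcc.1 hmem
      rwa [abs_mul, abs_of_nonneg (by linarith : (0:ℝ) ≤ ℓ/2)] at this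
    · rintro ⟨k, hk, hmem⟩
      refine ⟨k, hk, mem_center_uIcc.2 ?_⟩
      rwa [abs_mul, abs_of_nonneg (by linarith : (0:ℝ) ≤ ℓ/2)]
  have hAk : ∀ k : ℕ, MeasurableSet {p : ℝ × ℝ | |p.1 - (k:ℝ)*d| ≤ ℓ/2 * |Real.cos p.2|} := by
    intro k
    exact measurableSet_le
      ((continuous_fst.sub continuous_const).abs.measurable)
      ((continuous_const.mul ((Real.continuous_cos.comp continuous_snd).abs)).measurable)
  have hSm : MeasurableSet S := by
    rw [hSeq]; exact Finset.measurableSet_biUnion _ (fun k _ => hAk k)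
  unfold buffonFiniteProb
  rw [← hS, Measure.prod_apply_symm hSm, lintegral_smul_measure]
  have hslice : ∀ θ : ℝ,
      ((ENNReal.ofReal (1 / ((n : ℝ) * d))) • volume.restrict (Icc (0:ℝ) ((n : ℝ) * d)))
        ((fun x => (x, θ)) ⁻¹' S)
      = ENNReal.ofReal (1 / ((n:ℝ)*d)) * ENNReal.ofReal ((n:ℝ)*ℓ*|Real.cos θ|) := by
    intro θ
    have hpre : (fun x => (x, θ)) ⁻¹' S
        = ⋃ k ∈ Finset.range (n+1),
            Icc ((k:ℝ)*d - ℓ/2 * |Real.cos θ|) ((k:ℝ)*d + ℓ/2 * |Real.cos θ|) := by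
      rw [hSeq]
      ext x
      simp only [mem_preimage, mem_iUnion, mem_setOf_eq, mem_Icc, exists_prop]
      constructor
      · rintro ⟨k, hk, habs⟩
        rw [abs_le] at habs
        exact ⟨k, hk, by constructor <;> linarith [habs.1, habs.2]⟩
      · rintro ⟨k, hk, h1, h2⟩
        exact ⟨k, hk, by rw [abs_le]; constructor <;> linarith⟩
    rw [Measure.smul_apply, smul_eq_mul, Measure.restrict_apply, hpre]
    · have hcos : |Real.cos θ| ≤ 1 := Real.abs_cos_le_one θ
      have hh0 : 0 ≤ ℓ/2 * |Real.cos θ| := by positivity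
      have hhd : ℓ/2 * |Real.cos θ| ≤ d/2 := by nlinarith
      rw [slice_vol hd hn hh0 hhd]
      congr 1
      ring_nf
    · rw [hpre]
      exact Finset.measurableSet_biUnion _ (fun k _ => measurableSet_Icc)
  simp only [hslice]
  rw [lintegral_const_mul' _ _ ENNReal.ofReal_ne_top]
  have hint : ∫⁻ θ in Ico (0:ℝ) Real.pi, ENNReal.ofReal ((n:ℝ)*ℓ*|Real.cos θ|)
      = ENNReal.ofReal ((n:ℝ)*ℓ*2) := by
    rw [← ofReal_integral_eq_lintegral_ofReal]
    · congr 1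
      rw [MeasureTheory.integral_Ico_eq_integral_Ioo, ← MeasureTheory.integral_Ioc_eq_integral_Ioo,
        ← intervalIntegral.integral_of_le hpi.le]
      rw [intervalIntegral.integral_const_mul, abs_cos_integral]
    · exact ((continuous_const.mul Real.continuous_cos.abs).integrableOn_Icc).mono_set
        Ico_subset_Icc_self
    · exact Filter.Eventually.of_forall (fun θ => by positivity)
  rw [hint, smul_eq_mul, ENNReal.toReal_mul, ENNReal.toReal_mul, ENNReal.toReal_ofReal (by positivity),
    ENNReal.toReal_ofReal (by positivity), ENNReal.toReal_ofReal (by positivity)]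
  field_simp

theorem buffon_finite_floor (ℓ d : ℝ) (hℓ : 0 < ℓ) (hld : ℓ ≤ d) :
    ∃ C > (0:ℝ),
      (∀ n : ℕ, 1 ≤ n → |buffonFiniteProb ℓ d n - 2 * ℓ / (Real.pi * d)| ≤ C / n) ∧
      Filter.Tendsto (fun n : ℕ => buffonFiniteProb ℓ d n) Filter.atTop
        (nhds (2 * ℓ / (Real.pi * d))) := by
  refine ⟨1, one_pos, ?_, ?_⟩
  · intro n hn
    rw [buffon_eq ℓ d hℓ hld hn, sub_self, abs_zero]
    have : (0:ℝ) < n := by exact_mod_cast hn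
    positivity
  · have hev : ∀ᶠ n in Filter.atTop, buffonFiniteProb ℓ d n = 2 * ℓ / (Real.pi * d) :=
      Filter.eventually_atTop.2 ⟨1, fun n hn => buffon_eq ℓ d hℓ hld hn⟩
    exact Filter.Tendsto.congr' (hev.mono fun n h => h.symm) tendsto_const_nhds
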